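/- Every finite 2-edge-connected undirected graph admits a strongly connected orientation: each undirected edge can be assigned a direction so that the resulting digraph has a directed path between every ordered pair of vertices (Robbins' theorem). -/

import Mathlib

namespace RobbinsAux

open SimpleGraph Relation

variable {V : Type}

/-- A partial orientation `r` that lives on `S`, is antisymmetric, and is strongly
connected on `S`. -/
def Good (G : SimpleGraph V) (S : Set V) (r : V → V → Prop) : Prop :=
  (∀ u v, r u v → G.Adj u v ∧ u ∈ S ∧ v ∈ S) ∧
  (∀ u v, ¬(r u v ∧ r v u)) ∧
  (∀ u v, u ∈ S → v ∈ S → Relation.ReflTransGen r u v)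

/-- A walk from inside `S` to outside `S` yields a crossing edge. -/
lemma crossing {G : SimpleGraph V} {S : Set V} :
    ∀ {a b : V}, G.Walk a b → a ∈ S → b ∉ S →
      ∃ u, u ∈ S ∧ ∃ y, y ∉ S ∧ G.Adj u y := by
  intro a b p
  induction p with
  | nil => intro ha hb; exact absurd ha hb
  | @cons a c b h p ih =>
    intro ha hb
    by_cases hc : c ∈ S
    · exact ih hc hb
    · exact ⟨a, ha, c, hc, h⟩

/-- Prefix of a path until its first vertex in `S`. -/
lemma prefixToS {G' : SimpleGraph V} {S : Set V} :
    ∀ {a b : V} (p : G'.Walk a b), p.IsPath → a ∉ S → b ∈ S →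
      ∃ w, w ∈ S ∧ ∃ q : G'.Walk a w, q.IsPath ∧
        (∀ x ∈ q.support, x ∈ p.support) ∧
        (∀ e ∈ q.edges, e ∈ p.edges) ∧
        (∀ x ∈ q.support, x ≠ w → x ∉ S) := by
  intro a b p
  induction p with
  | nil => intro _ ha hb; exact absurd hb ha
  | @cons a c b h p ih =>
    intro hp ha hb
    have hp' := (Walk.cons_isPath_iff h p).1 hp
    by_cases hc : c ∈ S
    · refine ⟨c, hc, Walk.cons h Walk.nil, ?_, ?_, ?_, ?_⟩
      · rw [Walk.cons_isPath_iff]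
        refine ⟨Walk.IsPath.nil, ?_⟩
        simp only [Walk.support_nil, List.mem_singleton]
        rintro rfl; exact ha hc
      · intro x hx
        simp only [Walk.support_cons, Walk.support_nil, List.mem_cons,
          List.mem_singleton, or_false] at hx
        simp only [Walk.support_cons, List.mem_cons]
        rcases hx with rfl | rfl | hx
        rotate_right
        · exact absurd hx List.not_mem_nil
        · exact Or.inl rfl
        · exact Or.inr p.start_mem_support
      · intro e he
        simp only [Walk.edges_cons, Walk.edges_nil, List.mem_singleton] at he
        simp [Walk.edges_cons, he]
      · intro x hx hxc
        simp only [Walk.support_cons, Walk.support_nil, List.mem_cons,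
          List.mem_singleton, or_false] at hx
        rcases hx with rfl | rfl | hx
        · exact ha
        · exact absurd rfl hxc
        · exact absurd hx List.not_mem_nil
    · obtain ⟨w, hw, q, hq, hsup, hedg, hqS⟩ := ih hp'.1 hc hb
      refine ⟨w, hw, Walk.cons h q, ?_, ?_, ?_, ?_⟩
      · rw [Walk.cons_isPath_iff]
        exact ⟨hq, fun hmem => hp'.2 (hsup a hmem)⟩
      · intro x hx
        simp only [Walk.support_cons, List.mem_cons] at hx ⊢
        rcases hx with rfl | hx
        · exact Or.inl rfl
        · exact Or.inr (hsup x hx)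
      · intro e he
        simp only [Walk.edges_cons, List.mem_cons] at he ⊢
        rcases he with rfl | he
        · exact Or.inl rfl
        · exact Or.inr (hedg e he)
      · intro x hx hxw
        simp only [Walk.support_cons, List.mem_cons] at hx
        rcases hx with rfl | hx
        · exact ha
        · exact hqS x hx hxw

/-- Reachability along a walk all of whose darts are in `r`. -/
lemma walk_reach {G' : SimpleGraph V} {r : V → V → Prop} :
    ∀ {a w : V} (q : G'.Walk a w), (∀ d ∈ q.darts, r d.fst d.snd) →
      ∀ x ∈ q.support, Relation.ReflTransGen r a x ∧ Relation.ReflTransGen r x w := by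
  intro a w q
  induction q with
  | nil =>
    intro _ x hx
    simp only [Walk.support_nil, List.mem_singleton] at hx
    subst hx; exact ⟨.refl, .refl⟩
  | @cons a c w h q ih =>
    intro hd x hx
    have hac : r a c := hd ⟨(a, c), h⟩ (by simp [Walk.darts_cons])
    have hd' : ∀ d ∈ q.darts, r d.fst d.snd := fun d hm =>
      hd d (by simp [Walk.darts_cons, hm])
    rw [Walk.support_cons] at hx
    rcases List.mem_cons.1 hx with rfl | hx
    · exact ⟨.refl, .head hac ((ih hd' c q.start_mem_support).2)⟩
    · obtain ⟨h1, h2⟩ := ih hd' x hx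
      exact ⟨.head hac h1, h2⟩

/-- The key extension step: a good partial orientation on a proper nonempty subset
can be extended to a strictly larger subset. -/
lemma extend {G : SimpleGraph V} (hconn : G.Connected)
    (h2ec : ∀ e ∈ G.edgeSet, (G.deleteEdges {e}).Connected)
    {S : Set V} {r : V → V → Prop} (hg : Good G S r) (hne : S.Nonempty)
    (hSne : S ≠ Set.univ) :
    ∃ S' r', Good G S' r' ∧ S ⊆ S' ∧ ∃ y, y ∈ S' ∧ y ∉ S := by
  classical
  obtain ⟨hr1, hr2, hr3⟩ := hg
  obtain ⟨v0, hv0⟩ := hne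
  have hex : ∃ x, x ∉ S := by
    by_contra hno
    push_neg at hno
    exact hSne (Set.eq_univ_of_forall hno)
  obtain ⟨x, hx⟩ := hex
  obtain ⟨p⟩ := hconn.preconnected v0 x
  obtain ⟨u, hu, y, hy, huy⟩ := crossing p hv0 hx
  set G' := G.deleteEdges {s(u, y)} with hG'
  have hG'conn : G'.Connected := h2ec s(u, y) (G.mem_edgeSet.mpr huy)
  obtain ⟨p0⟩ := hG'conn.preconnected y u
  obtain ⟨w, hw, q, hqpath, hsup, hedg, hqS⟩ :=
    prefixToS (p0.toPath : G'.Path y u).1 (p0.toPath : G'.Path y u).2 hy hu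
  -- facts about edges of q
  have hG'le : ∀ {a b : V}, G'.Adj a b → G.Adj a b ∧ s(a, b) ≠ s(u, y) := by
    intro a b hab
    rw [hG', SimpleGraph.deleteEdges_adj] at hab
    exact ⟨hab.1, by simpa using hab.2⟩
  set dirE : List (V × V) := q.darts.map SimpleGraph.Dart.toProd with hdirE
  have hmemE : ∀ {a b : V}, (a, b) ∈ dirE →
      G'.Adj a b ∧ a ∈ q.support ∧ b ∈ q.support ∧ s(a, b) ∈ q.edges := by
    intro a b hab
    rw [hdirE, List.mem_map] at hab
    obtain ⟨d, hd, hdp⟩ := hab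
    have h1 : d.fst = a := congrArg Prod.fst hdp
    have h2 : d.snd = b := congrArg Prod.snd hdp
    refine ⟨h1 ▸ h2 ▸ d.adj, h1 ▸ q.dart_fst_mem_support_of_mem_darts hd,
      h2 ▸ q.dart_snd_mem_support_of_mem_darts hd, ?_⟩
    have : d.edge ∈ q.edges := List.mem_map_of_mem (f := SimpleGraph.Dart.edge) hd
    have hde : d.edge = s(a, b) := by rw [SimpleGraph.Dart.edge, hdp]
    rwa [hde] at this
  set r' : V → V → Prop := fun a b => r a b ∨ (a = u ∧ b = y) ∨ (a, b) ∈ dirE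
    with hr'
  have hrle : ∀ a b, r a b → r' a b := fun a b h => Or.inl h
  set S' : Set V := S ∪ {z | z ∈ q.support} with hS'
  have hyq : y ∈ q.support := q.start_mem_support
  have hwq : w ∈ q.support := q.end_mem_support
  -- antisymmetry
  have hanti : ∀ a b, ¬(r' a b ∧ r' b a) := by
    rintro a b ⟨h1, h2⟩
    rcases h1 with h1 | ⟨rfl, rfl⟩ | h1 <;> rcases h2 with h2 | h2 | h2
    · exact hr2 a b ⟨h1, h2⟩
    · exact hy (h2.2 ▸ (hr1 a b h1).2.1)
    · -- r a b and (b,a) ∈ dirE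
      obtain ⟨_, hbq, haq, _⟩ := hmemE h2
      obtain ⟨_, haS, hbS⟩ := hr1 a b h1
      have haw : a = w := by_contra fun hne => (hqS a haq hne) haS
      have hbw : b = w := by_contra fun hne => (hqS b hbq hne) hbS
      exact G.irrefl (haw ▸ hbw ▸ (hr1 a b h1).1)
    · exact hy (hr1 b a h2).2.1
    · exact G.irrefl (h2.2 ▸ h2.1 ▸ huy)
    · -- (u,y) and (y,u) ∈ dirE
      obtain ⟨hadj, _, _, _⟩ := hmemE h2
      exact (hG'le hadj).2 (Sym2.eq_swap)
    · obtain ⟨_, hbq, haq, _⟩ := hmemE h1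
      obtain ⟨_, hbS, haS⟩ := hr1 b a h2
      have haw : a = w := by_contra fun hne => (hqS a hbq hne) haS
      have hbw : b = w := by_contra fun hne => (hqS b haq hne) hbS
      exact G.irrefl (haw ▸ hbw ▸ (hr1 b a h2).1)
    · obtain ⟨hadj, _, _, _⟩ := hmemE h1
      exact (hG'le hadj).2 (h2.1 ▸ h2.2 ▸ Sym2.eq_swap)
    · -- both directions in dirE
      rw [hdirE, List.mem_map] at h1 h2
      obtain ⟨d1, hd1, hd1p⟩ := h1
      obtain ⟨d2, hd2, hd2p⟩ := h2
      have hnd : q.edges.Nodup := hqpath.isTrail.edges_nodup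
      have : d1 = d2 := by
        refine List.inj_on_of_nodup_map (f := SimpleGraph.Dart.edge) ?_ hd1 hd2 ?_
        · exact hnd
        · rw [SimpleGraph.Dart.edge, SimpleGraph.Dart.edge, hd1p, hd2p]
          exact Sym2.eq_swap
      have h' : (a, b) = (b, a) := by rw [← hd1p, this, hd2p]
      have hab : a = b := (Prod.ext_iff.1 h').1
      have hadj : G'.Adj a b := by
        have hda := d1.adj
        rwa [show d1.fst = a from congrArg Prod.fst hd1p,
          show d1.snd = b from congrArg Prod.snd hd1p] at hda
      exact G'.irrefl (hab ▸ hadj)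
  -- reachability along q
  have hqdarts : ∀ d ∈ q.darts, r' d.fst d.snd := by
    intro d hd
    exact Or.inr (Or.inr (by rw [hdirE, List.mem_map]; exact ⟨d, hd, rfl⟩))
  have hqreach := walk_reach q hqdarts
  have hreachS : ∀ a b, a ∈ S → b ∈ S → Relation.ReflTransGen r' a b := by
    intro a b ha hb
    exact Relation.ReflTransGen.mono hrle _ _ (hr3 a b ha hb)
  have huy' : r' u y := Or.inr (Or.inl ⟨rfl, rfl⟩)
  -- every vertex of S' reaches w
  have htoW : ∀ a ∈ S', Relation.ReflTransGen r' a w := by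
    intro a ha
    rcases ha with ha | ha
    · exact ((hreachS a u ha hu).tail huy').trans (hqreach y hyq).2
    · exact (hqreach a ha).2
  have hfromW : ∀ b ∈ S', Relation.ReflTransGen r' w b := by
    intro b hb
    rcases hb with hb | hb
    · exact hreachS w b hw hb
    · exact ((hreachS w u hw hu).tail huy').trans (hqreach b hb).1
  refine ⟨S', r', ⟨?_, hanti, ?_⟩, Set.subset_union_left, y, Or.inr hyq, hy⟩
  · intro a b hab
    rcases hab with h | ⟨rfl, rfl⟩ | h
    · obtain ⟨h1, h2, h3⟩ := hr1 a b h
      exact ⟨h1, Or.inl h2, Or.inl h3⟩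
    · exact ⟨huy, Or.inl hu, Or.inr hyq⟩
    · obtain ⟨hadj, h2, h3, _⟩ := hmemE h
      exact ⟨(hG'le hadj).1, Or.inr h2, Or.inr h3⟩
  · intro a b ha hb
    exact (htoW a ha).trans (hfromW b hb)

lemma grow [Fintype V] {G : SimpleGraph V} (hconn : G.Connected)
    (h2ec : ∀ e ∈ G.edgeSet, (G.deleteEdges {e}).Connected) :
    ∀ (n : ℕ) (S : Set V) (r : V → V → Prop), Good G S r → S.Nonempty →
      Sᶜ.ncard ≤ n → ∃ r', Good G Set.univ r' := by
  intro n
  induction n with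
  | zero =>
    intro S r hg hne hcard
    have h0 : Sᶜ.ncard = 0 := Nat.le_zero.1 hcard
    have hc : Sᶜ = ∅ := (Set.ncard_eq_zero (Set.toFinite _)).1 h0
    have : S = Set.univ := Set.compl_empty_iff.1 hc
    exact ⟨r, this ▸ hg⟩
  | succ n ih =>
    intro S r hg hne hcard
    by_cases hS : S = Set.univ
    · exact ⟨r, hS ▸ hg⟩
    · obtain ⟨S', r', hg', hsub, y, hyS', hyS⟩ := extend hconn h2ec hg hne hS
      refine ih S' r' hg' ⟨y, hyS'⟩ ?_
      have hss : S'ᶜ ⊂ Sᶜ := by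
        refine (Set.ssubset_iff_of_subset (Set.compl_subset_compl.2 hsub)).2 ?_
        exact ⟨y, hyS, fun hc => hc hyS'⟩
      have := Set.ncard_lt_ncard hss (Set.toFinite _)
      omega

end RobbinsAux

/-- Robbins' theorem: every finite 2-edge-connected undirected graph admits a
strongly connected orientation. -/
theorem robbins_strongly_connected_orientation {V : Type} [Fintype V]
    (G : SimpleGraph V) (hconn : G.Connected)
    (h2ec : ∀ e ∈ G.edgeSet, (G.deleteEdges {e}).Connected) :
    ∃ r : V → V → Prop,
      (∀ u v : V, r u v → G.Adj u v) ∧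
      (∀ u v : V, G.Adj u v → (r u v ∨ r v u) ∧ ¬(r u v ∧ r v u)) ∧
      (∀ u v : V, Relation.ReflTransGen r u v) := by
  classical
  cases isEmpty_or_nonempty V with
  | inl h =>
    exact ⟨fun _ _ => False, fun u v hf => hf.elim, fun u v _ => isEmptyElim u,
      fun u v => isEmptyElim u⟩
  | inr h =>
    obtain ⟨v0⟩ := h
    have hgood : RobbinsAux.Good G {v0} (fun _ _ => False) := by
      refine ⟨fun u v hf => hf.elim, fun u v hf => hf.1.elim, ?_⟩
      intro u v hu hv
      rw [Set.mem_singleton_iff] at hu hv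
      subst hu; subst hv; exact Relation.ReflTransGen.refl
    have hcard : ({v0}ᶜ : Set V).ncard ≤ Fintype.card V := by
      calc ({v0}ᶜ : Set V).ncard ≤ (Set.univ : Set V).ncard :=
            Set.ncard_le_ncard (Set.subset_univ _) (Set.toFinite _)
        _ = Fintype.card V := by rw [Set.ncard_univ, Nat.card_eq_fintype_card]
    obtain ⟨r, hr1, hr2, hr3⟩ :=
      RobbinsAux.grow hconn h2ec (Fintype.card V) {v0} _ hgood ⟨v0, rfl⟩ hcard
    refine ⟨fun a b => r a b ∨ (G.Adj a b ∧ ¬r a b ∧ ¬r b a ∧ WellOrderingRel a b),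
      ?_, ?_, ?_⟩
    · rintro u v (h | h)
      · exact (hr1 u v h).1
      · exact h.1
    · intro u v hadj
      constructor
      · by_cases h1 : r u v
        · exact Or.inl (Or.inl h1)
        · by_cases h2 : r v u
          · exact Or.inr (Or.inl h2)
          · rcases trichotomous_of WellOrderingRel u v with hw | hw | hw
            · exact Or.inl (Or.inr ⟨hadj, h1, h2, hw⟩)
            · exact absurd hw hadj.ne
            · exact Or.inr (Or.inr ⟨hadj.symm, h2, h1, hw⟩)
      · rintro ⟨h1 | h1, h2 | h2⟩
        · exact hr2 u v ⟨h1, h2⟩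
        · exact h2.2.2.1 h1
        · exact h1.2.2.1 h2
        · exact absurd (_root_.trans h1.2.2.2 h2.2.2.2) (irrefl u)
    · intro u v
      exact Relation.ReflTransGen.mono (fun a b hab => Or.inl hab) _ _ (hr3 u v trivial trivial)
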